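/- Let a : ℕ → ℝ be a bounded sequence whose Birkhoff averages B_n diverge. If liminf B_n = liminf a_n and limsup B_n = limsup a_n, then for every k ≥ 0 the Hölder means satisfy liminf_n H^{(k)}_n = liminf a_n and limsup_n H^{(k)}_n = limsup a_n; in particular ⋂_{k≥0} [α_k, β_k] = [liminf a_n, limsup a_n] is a nondegenerate interval (type B2). -/

import Mathlib

open Filter Topology

/-- Birkhoff averages: `birk a n = (1/n) * ∑_{i=0}^{n-1} a i` (junk value `0` at `n = 0`). -/
noncomputable def birk (a : ℕ → ℝ) (n : ℕ) : ℝ := (∑ i ∈ Finset.range n, a i) / n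

/-- Iterated Hölder means of a sequence `b` (indexed from 1):
`holderMeans b 0 n = b n` and `holderMeans b (k+1) n = (1/n) * ∑_{i=1}^n holderMeans b k i`. -/
noncomputable def holderMeans (b : ℕ → ℝ) : ℕ → ℕ → ℝ
  | 0, n => b n
  | k+1, n => (∑ i ∈ Finset.Icc 1 n, holderMeans b k i) / n

/- ### Auxiliary lemmas -/

lemma neg_limsup_aux (u : ℕ → ℝ) : limsup (fun n => -u n) atTop = - liminf u atTop := by
  rw [limsup_eq, liminf_eq, Real.sInf_def]
  congr 1
  have : -{a : ℝ | ∀ᶠ n in atTop, -u n ≤ a} = {a : ℝ | ∀ᶠ n in atTop, a ≤ u n} := by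
    ext x
    simp only [Set.mem_neg, Set.mem_setOf_eq]
    constructor
    · intro h; exact h.mono fun n hn => by linarith
    · intro h; exact h.mono fun n hn => by linarith
  rw [this]

lemma range_avg_bound (b : ℕ → ℝ) (C : ℝ) (hb : ∀ n, |b n| ≤ C) (n : ℕ) :
    |(∑ i ∈ Finset.range n, b i) / n| ≤ C := by
  have hC : 0 ≤ C := le_trans (abs_nonneg _) (hb 0)
  rcases Nat.eq_zero_or_pos n with h | h
  · simp [h, hC]
  · have hn : (0:ℝ) < n := by exact_mod_cast h
    rw [abs_div, abs_of_pos hn, div_le_iff₀ hn]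
    calc |∑ i ∈ Finset.range n, b i| ≤ ∑ i ∈ Finset.range n, |b i| :=
          Finset.abs_sum_le_sum_abs _ _
      _ ≤ ∑ _i ∈ Finset.range n, C := Finset.sum_le_sum fun i _ => hb i
      _ = C * n := by rw [Finset.sum_const, Finset.card_range, nsmul_eq_mul, mul_comm]

lemma icc_sum_eq_range (c : ℕ → ℝ) (n : ℕ) :
    ∑ i ∈ Finset.Icc 1 n, c i = ∑ i ∈ Finset.range n, c (i + 1) := by
  rw [show Finset.Icc 1 n = Finset.Ico 1 (n+1) by rw [Finset.Ico_add_one_right_eq_Icc],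
    Finset.sum_Ico_eq_sum_range]
  simp [add_comm]

lemma icc_sum_eq_ioc (c : ℕ → ℝ) (n : ℕ) :
    ∑ i ∈ Finset.Icc 1 n, c i = ∑ i ∈ Finset.Ioc 0 n, c i := by
  rw [← Finset.Icc_add_one_left_eq_Ioc]; rfl

lemma bdd_above_of_abs {c : ℕ → ℝ} {C : ℝ} (hc : ∀ n, |c n| ≤ C) :
    IsBoundedUnder (· ≤ ·) atTop c :=
  isBoundedUnder_of ⟨C, fun n => (abs_le.1 (hc n)).2⟩

lemma bdd_below_of_abs {c : ℕ → ℝ} {C : ℝ} (hc : ∀ n, |c n| ≤ C) :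
    IsBoundedUnder (· ≥ ·) atTop c :=
  isBoundedUnder_of ⟨-C, fun n => (abs_le.1 (hc n)).1⟩

lemma icc_avg_bound (c : ℕ → ℝ) (C : ℝ) (hc : ∀ n, |c n| ≤ C) (n : ℕ) :
    |(∑ i ∈ Finset.Icc 1 n, c i) / n| ≤ C := by
  rw [icc_sum_eq_range]
  exact range_avg_bound (fun i => c (i + 1)) C (fun i => hc _) n

/-- Cesàro averaging does not increase the limsup. -/
lemma cesaro_limsup_le (c : ℕ → ℝ) (C : ℝ) (hc : ∀ n, |c n| ≤ C) (β : ℝ)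
    (h : limsup c atTop ≤ β) :
    limsup (fun n : ℕ => (∑ i ∈ Finset.Icc 1 n, c i) / n) atTop ≤ β := by
  have hC : 0 ≤ C := le_trans (abs_nonneg _) (hc 0)
  refine le_of_forall_pos_le_add fun ε hε => ?_
  have h2 : ∀ᶠ m in atTop, c m < β + ε / 2 :=
    eventually_lt_of_limsup_lt (by linarith) (bdd_above_of_abs hc)
  obtain ⟨M, hM⟩ := eventually_atTop.1 h2
  refine limsup_le_of_le (bdd_below_of_abs (icc_avg_bound _ C hc)).isCoboundedUnder_le ?_
  have hcast : Tendsto (fun n : ℕ => (n : ℝ)) atTop atTop := tendsto_natCast_atTop_atTop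
  filter_upwards [eventually_ge_atTop M, eventually_gt_atTop 0,
    hcast.eventually_ge_atTop (2 * M * (C + |β| + 1) / ε)] with n hnM hn0 hn2
  have hn0' : (0:ℝ) < n := by exact_mod_cast hn0
  rw [div_le_iff₀ hn0', icc_sum_eq_ioc]
  rw [← Finset.sum_Ioc_consecutive _ (Nat.zero_le M) hnM]
  have hMn : (M:ℝ) ≤ (n:ℝ) := by exact_mod_cast hnM
  have hb1 : ∑ i ∈ Finset.Ioc 0 M, c i ≤ (M:ℝ) * C := by
    calc ∑ i ∈ Finset.Ioc 0 M, c i ≤ ∑ _i ∈ Finset.Ioc 0 M, C :=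
          Finset.sum_le_sum fun i _ => (abs_le.1 (hc i)).2
      _ = (M:ℝ) * C := by
          rw [Finset.sum_const, Nat.card_Ioc, nsmul_eq_mul]; simp
  have hb2 : ∑ i ∈ Finset.Ioc M n, c i ≤ ((n:ℝ) - M) * (β + ε / 2) := by
    calc ∑ i ∈ Finset.Ioc M n, c i ≤ ∑ _i ∈ Finset.Ioc M n, (β + ε / 2) :=
          Finset.sum_le_sum fun i hi => (hM i (Finset.mem_Ioc.1 hi).1.le).le
      _ = ((n:ℝ) - M) * (β + ε / 2) := by
          rw [Finset.sum_const, Nat.card_Ioc, nsmul_eq_mul, Nat.cast_sub hnM]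
  have h3 : 2 * (M:ℝ) * (C + |β| + 1) ≤ n * ε := by
    rw [div_le_iff₀ hε] at hn2; linarith
  have hM0 : (0:ℝ) ≤ M := Nat.cast_nonneg M
  have habs1 : -|β| ≤ β := neg_abs_le β
  have habs2 : β ≤ |β| := le_abs_self β
  nlinarith [mul_nonneg hM0 hε.le]

set_option maxHeartbeats 1000000 in
/-- Key lemma: if `c` is itself an average sequence of `b` with `limsup b ≤ β`,
and `limsup c ≥ β`, then the Cesàro averages of `c` still have `limsup ≥ β`. -/
lemma cesaro_limsup_ge (β : ℝ) (b c : ℕ → ℝ) (Cb Cc : ℝ)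
    (hb : ∀ n, |b n| ≤ Cb) (hc : ∀ n, |c n| ≤ Cc)
    (hrep : ∀ n, c n = (∑ i ∈ Finset.range n, b i) / n)
    (hbs : limsup b atTop ≤ β) (hcs : β ≤ limsup c atTop) :
    β ≤ limsup (fun n : ℕ => (∑ i ∈ Finset.Icc 1 n, c i) / n) atTop := by
  have hCc : 0 ≤ Cc := le_trans (abs_nonneg _) (hc 0)
  set L := limsup (fun n : ℕ => (∑ i ∈ Finset.Icc 1 n, c i) / n) atTop with hL
  have hKpos : (0:ℝ) < 2*Cc + 2*|β| + 9 := by positivity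
  suffices key : ∀ ε : ℝ, 0 < ε → ε ≤ 1/2 → β - (2*Cc + 2*|β| + 9) * ε ≤ L by
    by_contra hlt
    push_neg at hlt
    have hε : 0 < min (1/2) ((β - L)/(2*(2*Cc + 2*|β| + 9))) := by
      apply lt_min (by norm_num)
      apply div_pos (by linarith) (by linarith)
    have h1 := key _ hε (min_le_left _ _)
    have h2 : (2*Cc + 2*|β| + 9) * min (1/2) ((β - L)/(2*(2*Cc + 2*|β| + 9)))
        ≤ (2*Cc + 2*|β| + 9) * ((β - L)/(2*(2*Cc + 2*|β| + 9))) :=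
      mul_le_mul_of_nonneg_left (min_le_right _ _) hKpos.le
    have h3 : (2*Cc + 2*|β| + 9) * ((β - L)/(2*(2*Cc + 2*|β| + 9))) = (β - L)/2 := by
      field_simp
    linarith
  intro ε hε hε2
  obtain ⟨M1, hM1⟩ := eventually_atTop.1 <| eventually_lt_of_limsup_lt
    (show limsup b atTop < β + ε^2 by nlinarith) (bdd_above_of_abs hb)
  set M0 := max M1 1 with hM0def
  have hM0b : ∀ i, M0 ≤ i → b i ≤ β + ε^2 :=
    fun i hi => (hM1 i (le_trans (le_max_left _ _) hi)).le
  have hM01 : 1 ≤ M0 := le_max_right _ _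
  have hfreq : ∃ᶠ N in atTop, β - ε^2 < c N :=
    frequently_lt_of_lt_limsup (bdd_below_of_abs hc).isCoboundedUnder_le
      (by nlinarith)
  refine le_limsup_of_frequently_le ?_ (bdd_above_of_abs (icc_avg_bound _ Cc hc))
  have hcast : Tendsto (fun n : ℕ => (n:ℝ)) atTop atTop := tendsto_natCast_atTop_atTop
  refine (hfreq.and_eventually (hcast.eventually_ge_atTop (2*((M0:ℝ)+1)/ε))).mono ?_
  rintro N ⟨hcN, hNlarge⟩
  have hεN : (0:ℝ) ≤ ε * N := by positivity
  set m : ℕ := M0 + Nat.ceil (ε * (N:ℝ)) with hmdef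
  have hmlow : ε * N ≤ (m:ℝ) := by
    have h := Nat.le_ceil (ε * (N:ℝ))
    have : (m:ℝ) = (M0:ℝ) + (Nat.ceil (ε * (N:ℝ)) : ℝ) := by push_cast [hmdef]; ring
    rw [this]
    have := (Nat.cast_nonneg M0 : (0:ℝ) ≤ M0)
    linarith
  have hmup : (m:ℝ) ≤ (M0:ℝ) + ε * N + 1 := by
    have h := Nat.ceil_lt_add_one hεN
    have : (m:ℝ) = (M0:ℝ) + (Nat.ceil (ε * (N:ℝ)) : ℝ) := by push_cast [hmdef]; ring
    rw [this]; linarith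
  have hN2 : 2*((M0:ℝ)+1) ≤ ε * N := by rw [div_le_iff₀ hε] at hNlarge; linarith
  have hm2 : (m:ℝ) ≤ 2 * (ε * N) := by linarith
  have hN0 : (0:ℝ) < (N:ℝ) := by nlinarith [(Nat.cast_nonneg M0 : (0:ℝ) ≤ M0),
    (Nat.cast_nonneg N : (0:ℝ) ≤ N)]
  have hmN : (m:ℝ) < (N:ℝ) := by nlinarith [(Nat.cast_nonneg M0 : (0:ℝ) ≤ M0)]
  have hmNnat : m ≤ N := by exact_mod_cast hmN.le
  have hm1 : 1 ≤ m := hM01.trans (Nat.le_add_right M0 _)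
  have claimA : ∀ n, m ≤ n → n ≤ N → β - 3 * ε ≤ c n := by
    intro n hmn hnN
    have hn1 : 1 ≤ n := le_trans hm1 hmn
    have hn0 : (0:ℝ) < n := by exact_mod_cast hn1
    have heqn : (n:ℝ) * c n = ∑ i ∈ Finset.range n, b i := by
      rw [hrep n]; field_simp
    have heqN : (N:ℝ) * c N = ∑ i ∈ Finset.range N, b i := by
      rw [hrep N]; field_simp
    have hdiff : (N:ℝ) * c N - n * c n = ∑ i ∈ Finset.Ico n N, b i := by
      rw [Finset.sum_Ico_eq_sub _ hnN, heqn, heqN]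
    have hsum : ∑ i ∈ Finset.Ico n N, b i ≤ ((N:ℝ) - n) * (β + ε^2) := by
      calc ∑ i ∈ Finset.Ico n N, b i ≤ ∑ _i ∈ Finset.Ico n N, (β + ε^2) :=
            Finset.sum_le_sum fun i hi => hM0b i
              (le_trans (le_trans (Nat.le_add_right M0 _) hmn) (Finset.mem_Ico.1 hi).1)
        _ = ((N:ℝ) - n) * (β + ε^2) := by
            rw [Finset.sum_const, Nat.card_Ico, nsmul_eq_mul, Nat.cast_sub hnN]
    have h1 : (N:ℝ) * (β - ε^2) ≤ N * c N :=
      mul_le_mul_of_nonneg_left hcN.le hN0.le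
    have h2 : (N:ℝ)*(β - ε^2) - ((N:ℝ)-n)*(β+ε^2) ≤ (n:ℝ) * c n := by linarith
    have hnε : ε * N ≤ (n:ℝ) := le_trans hmlow (by exact_mod_cast hmn)
    have h3 : (n:ℝ) * (β - 3*ε) ≤ n * c n := by
      nlinarith [mul_le_mul_of_nonneg_left hnε hε.le, sq_nonneg ε,
        mul_nonneg hn0.le (sq_nonneg ε)]
    exact (mul_le_mul_iff_right₀ hn0).1 h3
  rw [le_div_iff₀ hN0, icc_sum_eq_ioc]
  set m' := m - 1 with hm'def
  have hm'' : m' + 1 = m := Nat.succ_pred_eq_of_pos hm1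
  have hm'N : m' ≤ N := le_trans (Nat.sub_le m 1) hmNnat
  rw [← Finset.sum_Ioc_consecutive _ (Nat.zero_le m') hm'N]
  have hpart1 : -((m':ℝ) * Cc) ≤ ∑ i ∈ Finset.Ioc 0 m', c i := by
    calc -((m':ℝ) * Cc) = ∑ _i ∈ Finset.Ioc 0 m', (-Cc) := by
          rw [Finset.sum_const, Nat.card_Ioc, Nat.sub_zero, nsmul_eq_mul]; ring
      _ ≤ ∑ i ∈ Finset.Ioc 0 m', c i :=
          Finset.sum_le_sum fun i _ => (abs_le.1 (hc i)).1
  have hpart2 : ((N:ℝ) - m') * (β - 3*ε) ≤ ∑ i ∈ Finset.Ioc m' N, c i := by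
    calc ((N:ℝ) - m') * (β - 3*ε) = ∑ _i ∈ Finset.Ioc m' N, (β - 3*ε) := by
          rw [Finset.sum_const, Nat.card_Ioc, nsmul_eq_mul, Nat.cast_sub hm'N]
      _ ≤ ∑ i ∈ Finset.Ioc m' N, c i := by
          refine Finset.sum_le_sum fun i hi => claimA i ?_ (Finset.mem_Ioc.1 hi).2
          have := (Finset.mem_Ioc.1 hi).1
          omega
  have hm'up : (m':ℝ) ≤ 2*(ε*N) := le_trans (by exact_mod_cast Nat.sub_le m 1) hm2
  have hm'0 : (0:ℝ) ≤ m' := Nat.cast_nonneg _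
  have habs : (0:ℝ) ≤ Cc + |β| := by positivity
  have t1 : (0:ℝ) ≤ (2*(ε*N) - m') * (Cc + |β|) :=
    mul_nonneg (sub_nonneg.2 hm'up) habs
  have t2 : (0:ℝ) ≤ (m':ℝ) * (|β| - β) :=
    mul_nonneg hm'0 (sub_nonneg.2 (le_abs_self β))
  have t3 : (0:ℝ) ≤ (m':ℝ) * ε := mul_nonneg hm'0 hε.le
  have t4 : (0:ℝ) ≤ ε * N := hεN
  nlinarith [t1, t2, t3, t4]

/-- **Proposition 4.**  Let `a` be bounded with divergent Birkhoff averages `B_n`.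
If `liminf B = liminf a` and `limsup B = limsup a`, then for every `k` the Hölder
means satisfy `liminf H^{(k)} = liminf a` and `limsup H^{(k)} = limsup a`; in
particular `⋂_k [α_k, β_k] = [liminf a, limsup a]` is a nondegenerate interval
(type B2). -/
theorem type_B2_of_extremal_cluster_interval (a : ℕ → ℝ)
    (hbdd : ∃ C : ℝ, ∀ n, |a n| ≤ C)
    (hdiv : ¬ ∃ L : ℝ, Tendsto (birk a) atTop (𝓝 L))
    (hinf : liminf (birk a) atTop = liminf a atTop)
    (hsup : limsup (birk a) atTop = limsup a atTop) :
    (∀ k : ℕ, liminf (fun n : ℕ => holderMeans (birk a) k n) atTop = liminf a atTop ∧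
      limsup (fun n : ℕ => holderMeans (birk a) k n) atTop = limsup a atTop) ∧
    (⋂ k : ℕ, Set.Icc (liminf (fun n : ℕ => holderMeans (birk a) k n) atTop)
        (limsup (fun n : ℕ => holderMeans (birk a) k n) atTop)) =
      Set.Icc (liminf a atTop) (limsup a atTop) ∧
    liminf a atTop < limsup a atTop := by
  obtain ⟨C, hCa⟩ := hbdd
  have hbirk : ∀ n, |birk a n| ≤ C := fun n => range_avg_bound a C hCa n
  have hH0 : holderMeans (birk a) 0 = birk a := funext fun n => rfl
  have main : ∀ k : ℕ, (∀ n, |holderMeans (birk a) k n| ≤ C) ∧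
      (∃ b : ℕ → ℝ, (∃ Cb : ℝ, ∀ n, |b n| ≤ Cb) ∧ limsup b atTop ≤ limsup a atTop ∧
        liminf a atTop ≤ liminf b atTop ∧
        ∀ n, holderMeans (birk a) k n = (∑ i ∈ Finset.range n, b i) / n) ∧
      liminf (holderMeans (birk a) k) atTop = liminf a atTop ∧
      limsup (holderMeans (birk a) k) atTop = limsup a atTop := by
    intro k
    induction k with
    | zero =>
      refine ⟨fun n => by rw [hH0]; exact hbirk n,
        ⟨a, ⟨C, hCa⟩, le_refl _, le_refl _, fun n => rfl⟩, ?_, ?_⟩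
      · rw [hH0]; exact hinf
      · rw [hH0]; exact hsup
    | succ k ih =>
      obtain ⟨hbd, ⟨b, ⟨Cb, hCb⟩, hbs, hbi, hrep⟩, hli, hls⟩ := ih
      set H := holderMeans (birk a) k with hHdef
      have hsucc : ∀ n : ℕ, holderMeans (birk a) (k+1) n =
          (∑ i ∈ Finset.Icc 1 n, H i) / n := fun n => rfl
      have hfun : holderMeans (birk a) (k+1) =
          fun n : ℕ => (∑ i ∈ Finset.Icc 1 n, H i) / n := funext hsucc
      have hshiftsup : limsup (fun i : ℕ => H (i+1)) atTop = limsup a atTop := by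
        rw [limsup_nat_add H 1]; exact hls
      have hshiftinf : liminf (fun i : ℕ => H (i+1)) atTop = liminf a atTop := by
        rw [liminf_nat_add H 1]; exact hli
      have hsup' : limsup (fun n : ℕ => (∑ i ∈ Finset.Icc 1 n, H i) / n) atTop
          = limsup a atTop := by
        refine le_antisymm (cesaro_limsup_le H C hbd _ (le_of_eq hls)) ?_
        exact cesaro_limsup_ge _ b H Cb C hCb hbd hrep hbs (le_of_eq hls.symm)
      have hinf' : liminf (fun n : ℕ => (∑ i ∈ Finset.Icc 1 n, H i) / n) atTop
          = liminf a atTop := by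
        have hnegbd : ∀ n, |(-H n : ℝ)| ≤ C := fun n => by rw [abs_neg]; exact hbd n
        have hnegeq : (fun n : ℕ => (∑ i ∈ Finset.Icc 1 n, -H i) / n)
            = fun n : ℕ => -((∑ i ∈ Finset.Icc 1 n, H i) / n) := by
          funext n
          rw [← neg_div, ← Finset.sum_neg_distrib]
        have hup : limsup (fun n : ℕ => (∑ i ∈ Finset.Icc 1 n, -H i) / n) atTop
            ≤ -(liminf a atTop) := by
          apply cesaro_limsup_le _ C hnegbd
          rw [neg_limsup_aux, hli]
        have hdown : -(liminf a atTop)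
            ≤ limsup (fun n : ℕ => (∑ i ∈ Finset.Icc 1 n, -H i) / n) atTop := by
          refine cesaro_limsup_ge _ (fun i => -b i) (fun i => -H i) Cb C
            (fun n => by rw [abs_neg]; exact hCb n) hnegbd
            (fun n => by show -H n = _; rw [Finset.sum_neg_distrib, neg_div, hrep n]) ?_ ?_
          · rw [neg_limsup_aux]; linarith
          · rw [neg_limsup_aux, hli]
        rw [hnegeq, neg_limsup_aux] at hup hdown
        linarith
      refine ⟨fun n => by rw [hsucc n]; exact icc_avg_bound H C hbd n,
        ⟨fun i => H (i+1), ⟨C, fun i => hbd _⟩, le_of_eq hshiftsup,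
          le_of_eq hshiftinf.symm, fun n => by rw [hsucc n, icc_sum_eq_range]⟩, ?_, ?_⟩
      · rw [hfun]; exact hinf'
      · rw [hfun]; exact hsup'
  have hpairs : ∀ k : ℕ,
      liminf (fun n : ℕ => holderMeans (birk a) k n) atTop = liminf a atTop ∧
      limsup (fun n : ℕ => holderMeans (birk a) k n) atTop = limsup a atTop :=
    fun k => ⟨(main k).2.2.1, (main k).2.2.2⟩
  have hble := bdd_above_of_abs hbirk
  have hblw := bdd_below_of_abs hbirk
  have hlt : liminf a atTop < limsup a atTop := by
    rcases lt_or_ge (liminf a atTop) (limsup a atTop) with h | h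
    · exact h
    · exfalso
      have heq : liminf (birk a) atTop = limsup (birk a) atTop := by
        refine le_antisymm (liminf_le_limsup hble hblw) ?_
        rw [hinf, hsup]; exact h
      exact hdiv ⟨limsup (birk a) atTop,
        tendsto_of_liminf_eq_limsup heq rfl hble hblw⟩
  refine ⟨hpairs, ?_, hlt⟩
  have hset : ∀ k : ℕ,
      Set.Icc (liminf (fun n : ℕ => holderMeans (birk a) k n) atTop)
        (limsup (fun n : ℕ => holderMeans (birk a) k n) atTop)
      = Set.Icc (liminf a atTop) (limsup a atTop) :=
    fun k => by rw [(hpairs k).1, (hpairs k).2]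
  simp only [hset, Set.iInter_const]
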